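/- Let n ≥ 1 and ε > 0, and let g : (0, ε) → Sym(n, ℝ) be a C² family of invertible symmetric n×n real matrices satisfying the matrix ODE g̈(Ω) = (1/2) ġ(Ω) g(Ω)⁻¹ ġ(Ω) + Ω⁻¹ ġ(Ω) for all Ω ∈ (0, ε), where dots denote d/dΩ. Then g is C^∞ on (0, ε) and for all Ω ∈ (0, ε): (i) (d/dΩ)( ġ g⁻¹ ġ )(Ω) = (2/Ω)( ġ g⁻¹ ġ )(Ω); (ii) g⁽³⁾(Ω) = (3/(2Ω)) ( ġ g⁻¹ ġ )(Ω); (iii) g⁽⁴⁾(Ω) = (3/(2Ω²)) ( ġ g⁻¹ ġ )(Ω); (iv) g⁽⁵⁾(Ω) = 0. -/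

import Mathlib

open scoped BigOperators Matrix

attribute [local instance] Matrix.normedAddCommGroup Matrix.normedSpace


noncomputable def mulL (n : ℕ) : Matrix (Fin n) (Fin n) ℝ →L[ℝ] Matrix (Fin n) (Fin n) ℝ →L[ℝ] Matrix (Fin n) (Fin n) ℝ :=
  LinearMap.toContinuousLinearMap <|
    { toFun := fun A => LinearMap.toContinuousLinearMap (LinearMap.mul ℝ (Matrix (Fin n) (Fin n) ℝ) A)
      map_add' := by intro A B; ext C; simp [add_mul]
      map_smul' := by intro r A; ext C; simp [smul_mul_assoc] }

variable {n : ℕ}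
local notation "M" => Matrix (Fin n) (Fin n) ℝ

@[simp] lemma mulL_apply (A B : M) : mulL n A B = A * B := by
  simp [mulL]

lemma contDiff_mul2 : ContDiff ℝ (⊤:ℕ∞) (fun p : M × M => p.1 * p.2) := by
  have := (mulL n).isBoundedBilinearMap.contDiff (n := (⊤:ℕ∞))
  convert this using 2 with p
  exact (mulL_apply _ _).symm

lemma contDiff_entry (i j : Fin n) : ContDiff ℝ (⊤:ℕ∞) (fun A : M => A i j) := by
  have : (fun A : M => A i j) = fun A : M => LinearMap.toContinuousLinearMap
      ((LinearMap.proj j).comp ((LinearMap.proj i).comp (Matrix.ofLinearEquiv ℝ).symm.toLinearMap)) A := by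
    funext A; simp [Matrix.ofLinearEquiv]
  rw [this]
  exact (LinearMap.toContinuousLinearMap _).contDiff

lemma contDiff_det : ContDiff ℝ (⊤:ℕ∞) (fun A : M => A.det) := by
  have : (fun A : M => A.det)
      = fun A : M => ∑ σ : Equiv.Perm (Fin n), (Equiv.Perm.sign σ : ℝ) * ∏ i, A (σ i) i := by
    funext A; rw [Matrix.det_apply]; simp [Units.smul_def, zsmul_eq_mul]
  rw [this]
  exact ContDiff.sum fun σ _ => ContDiff.mul contDiff_const
    (contDiff_prod fun i _ => contDiff_entry _ _)

lemma contDiff_pi_matrix {E : Type*} [NormedAddCommGroup E] [NormedSpace ℝ E] {f : E → M} (h : ∀ i j, ContDiff ℝ (⊤:ℕ∞) (fun s => f s i j)) :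
    ContDiff ℝ (⊤:ℕ∞) f := by
  have hf : f = fun s =>
      LinearMap.toContinuousLinearMap (Matrix.ofLinearEquiv ℝ).toLinearMap (fun i j => f s i j) := by
    funext s; rfl
  rw [hf]
  exact (LinearMap.toContinuousLinearMap _).contDiff.comp
    (contDiff_pi.2 fun i => contDiff_pi.2 fun j => h i j)

lemma contDiff_adjugate_comp {E : Type*} [NormedAddCommGroup E] [NormedSpace ℝ E] {f : E → M} (hf : ContDiff ℝ (⊤:ℕ∞) f) :
    ContDiff ℝ (⊤:ℕ∞) (fun s => (f s).adjugate) := by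
  apply contDiff_pi_matrix
  intro i j
  have : (fun s => (f s).adjugate i j)
      = fun s => ((f s).updateRow j (Pi.single i 1)).det := by
    funext s; rw [Matrix.adjugate_apply]
  rw [this]
  refine contDiff_det.comp (contDiff_pi_matrix fun k l => ?_)
  by_cases hk : k = j
  · subst hk; simpa [Matrix.updateRow_apply] using (contDiff_const : ContDiff ℝ (⊤:ℕ∞) fun _ : E => (Pi.single i 1 : Fin n → ℝ) l)
  · simpa [Matrix.updateRow_apply, hk, Function.comp_def] using (contDiff_entry k l).comp hf

lemma inv_formula (A : M) : A⁻¹ = (A.det)⁻¹ • A.adjugate := by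
  rw [Matrix.inv_def, Ring.inverse_eq_inv']

lemma hasDerivAt_matmul {f h : ℝ → M} {f' h' : M} {x : ℝ}
    (hf : HasDerivAt f f' x) (hh : HasDerivAt h h' x) :
    HasDerivAt (fun s => f s * h s) (f' * h x + f x * h') x := by
  exact ((mulL n).hasDerivAt_of_bilinear (fun _ => hf) (fun _ => hh)).congr_deriv (add_comm _ _)

lemma contDiffOn_matmul {f h : ℝ → M} {k : ℕ∞} {s : Set ℝ}
    (hf : ContDiffOn ℝ k f s) (hh : ContDiffOn ℝ k h s) :
    ContDiffOn ℝ k (fun x => f x * h x) s := by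
  have := ((mulL n).isBoundedBilinearMap.contDiff (n := k)).comp_contDiffOn (hf.prodMk hh)
  exact this

lemma contDiffOn_inv_comp {f : ℝ → M} {k : ℕ∞} {s : Set ℝ}
    (hf : ContDiffOn ℝ k f s) (hu : ∀ x ∈ s, IsUnit (f x)) :
    ContDiffOn ℝ k (fun x => (f x)⁻¹) s := by
  have hdet : ∀ x ∈ s, (f x).det ≠ 0 := fun x hx => by
    have := (Matrix.isUnit_iff_isUnit_det _).1 (hu x hx)
    simpa [isUnit_iff_ne_zero] using this
  have h1 : ContDiffOn ℝ k (fun x => ((f x).det)⁻¹) s :=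
    ((contDiff_det.of_le (mod_cast le_top)).comp_contDiffOn hf).inv hdet
  have h2 : ContDiffOn ℝ k (fun x => (f x).adjugate) s :=
    ((contDiff_adjugate_comp (f := (id : M → M)) contDiff_id).of_le
      (mod_cast le_top)).comp_contDiffOn hf
  refine (h1.smul h2).congr fun x hx => inv_formula _

lemma hasDerivAt_matinv {g : ℝ → M} {S : Set ℝ} (hS : IsOpen S) {x : ℝ} (hx : x ∈ S)
    (hg : ContDiffOn ℝ 1 g S) (hu : ∀ s ∈ S, IsUnit (g s)) :
    HasDerivAt (fun s => (g s)⁻¹) (-((g x)⁻¹ * deriv g x * (g x)⁻¹)) x := by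
  have hdet : ∀ s ∈ S, IsUnit (g s).det := fun s hs => (Matrix.isUnit_iff_isUnit_det _).1 (hu s hs)
  have hdg : HasDerivAt g (deriv g x) x :=
    ((hg.contDiffAt (hS.mem_nhds hx)).differentiableAt one_ne_zero).hasDerivAt
  have hinvC : ContDiffOn ℝ 1 (fun s => (g s)⁻¹) S := contDiffOn_inv_comp hg hu
  have hdi : DifferentiableAt ℝ (fun s => (g s)⁻¹) x :=
    (hinvC.contDiffAt (hS.mem_nhds hx)).differentiableAt one_ne_zero
  have hiv : HasDerivAt (fun s => (g s)⁻¹) (deriv (fun s => (g s)⁻¹) x) x := hdi.hasDerivAt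
  have hprod := hasDerivAt_matmul hdg hiv
  have heq : (fun s => g s * (g s)⁻¹) =ᶠ[nhds x] (fun _ => (1 : M)) :=
    Filter.eventuallyEq_of_mem (hS.mem_nhds hx) fun s hs => Matrix.mul_nonsing_inv _ (hdet s hs)
  have hzero : deriv g x * (g x)⁻¹ + g x * deriv (fun s => (g s)⁻¹) x = 0 := by
    have h1 : HasDerivAt (fun _ : ℝ => (1 : M))
        (deriv g x * (g x)⁻¹ + g x * deriv (fun s => (g s)⁻¹) x) x :=
      hprod.congr_of_eventuallyEq heq.symm
    exact h1.unique (hasDerivAt_const x 1)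
  have hsolve : deriv (fun s => (g s)⁻¹) x = -((g x)⁻¹ * deriv g x * (g x)⁻¹) := by
    have h2 : g x * deriv (fun s => (g s)⁻¹) x = -(deriv g x * (g x)⁻¹) := by
      rw [eq_neg_iff_add_eq_zero, add_comm]; exact hzero
    calc deriv (fun s => (g s)⁻¹) x
        = (g x)⁻¹ * (g x * deriv (fun s => (g s)⁻¹) x) := by
          rw [← mul_assoc, Matrix.nonsing_inv_mul _ (hdet x hx), one_mul]
      _ = -((g x)⁻¹ * deriv g x * (g x)⁻¹) := by rw [h2, mul_neg, mul_assoc]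
  rw [← hsolve]; exact hiv

/-- identities (2.41)–(2.42) in the proof of Lemma 3.3 of the paper.
A C² family of invertible symmetric matrices solving the purely-magnetic ODE
`g̈ = (1/2) ġ g⁻¹ ġ + Ω⁻¹ ġ` on `(0, ε)` is C^∞ there, `ġ g⁻¹ ġ` satisfies
`(ġ g⁻¹ ġ)· = (2/Ω) ġ g⁻¹ ġ`, and `g⁽³⁾ = (3/(2Ω)) ġ g⁻¹ ġ`, `g⁽⁴⁾ = (3/(2Ω²)) ġ g⁻¹ ġ`,
`g⁽⁵⁾ = 0`. -/
theorem statement3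
    (n : ℕ) (hn : 1 ≤ n) (ε : ℝ) (hε : 0 < ε)
    (g : ℝ → Matrix (Fin n) (Fin n) ℝ)
    (hg : ContDiffOn ℝ 2 g (Set.Ioo 0 ε))
    (hsym : ∀ Ω ∈ Set.Ioo (0:ℝ) ε, (g Ω).IsSymm)
    (hinv : ∀ Ω ∈ Set.Ioo (0:ℝ) ε, IsUnit (g Ω))
    (hODE : ∀ Ω ∈ Set.Ioo (0:ℝ) ε,
      deriv (deriv g) Ω
        = (1/2 : ℝ) • (deriv g Ω * (g Ω)⁻¹ * deriv g Ω) + Ω⁻¹ • deriv g Ω) :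
    ContDiffOn ℝ (⊤ : ℕ∞) g (Set.Ioo 0 ε) ∧
    ∀ Ω ∈ Set.Ioo (0:ℝ) ε,
      deriv (fun s => deriv g s * (g s)⁻¹ * deriv g s) Ω
          = (2/Ω) • (deriv g Ω * (g Ω)⁻¹ * deriv g Ω) ∧
      iteratedDeriv 3 g Ω = (3/(2*Ω)) • (deriv g Ω * (g Ω)⁻¹ * deriv g Ω) ∧
      iteratedDeriv 4 g Ω = (3/(2*Ω^2)) • (deriv g Ω * (g Ω)⁻¹ * deriv g Ω) ∧
      iteratedDeriv 5 g Ω = 0 := by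
  set S : Set ℝ := Set.Ioo 0 ε with hSdef
  have hS : IsOpen S := isOpen_Ioo
  set Q : ℝ → Matrix (Fin n) (Fin n) ℝ := fun s => deriv g s * (g s)⁻¹ * deriv g s with hQdef
  -- bootstrap smoothness
  have hsmooth : ∀ k : ℕ, ContDiffOn ℝ (k + 2 : ℕ) g S := by
    intro k
    induction k with
    | zero => exact_mod_cast hg
    | succ k ih =>
      have hdg : ContDiffOn ℝ (k + 1 : ℕ) (deriv g) S :=
        ih.deriv_of_isOpen hS (by exact_mod_cast le_refl (k + 2 : ℕ))
      have hinvs : ContDiffOn ℝ (k + 1 : ℕ) (fun s => (g s)⁻¹) S :=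
        contDiffOn_inv_comp (ih.of_le (Nat.cast_le.mpr (by omega))) hinv
      have hQs : ContDiffOn ℝ (k + 1 : ℕ) Q S :=
        contDiffOn_matmul (contDiffOn_matmul hdg hinvs) hdg
      have hscal : ContDiffOn ℝ (k + 1 : ℕ) (fun s : ℝ => s⁻¹) S :=
        contDiffOn_id.inv fun x hx => ne_of_gt hx.1
      have hrhs : ContDiffOn ℝ (k + 1 : ℕ)
          (fun s => (1/2 : ℝ) • Q s + s⁻¹ • deriv g s) S :=
        (hQs.const_smul ((1:ℝ)/2)).add (hscal.smul hdg)
      have hdd : ContDiffOn ℝ (k + 1 : ℕ) (deriv (deriv g)) S :=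
        hrhs.congr fun x hx => hODE x hx
      have hna : ∀ m : ℕ, (m : WithTop ℕ∞) ≠ (⊤ : WithTop ℕ∞) := by
        intro m h
        simp at h
      have hdg2 : ContDiffOn ℝ (k + 2 : ℕ) (deriv g) S := by
        have : ((k + 2 : ℕ) : WithTop ℕ∞) = (k + 1 : ℕ) + 1 := by push_cast; ring
        rw [this, contDiffOn_succ_iff_deriv_of_isOpen hS]
        exact ⟨hdg.differentiableOn (by simp),
          fun h => absurd h (hna _), hdd⟩
      have : ((k + 3 : ℕ) : WithTop ℕ∞) = (k + 2 : ℕ) + 1 := by push_cast; ring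
      rw [show k + 1 + 2 = k + 3 from rfl, this, contDiffOn_succ_iff_deriv_of_isOpen hS]
      exact ⟨ih.differentiableOn (by simp),
        fun h => absurd h (hna _), hdg2⟩
  have htop : ContDiffOn ℝ (⊤ : ℕ∞) g S := by
    rw [contDiffOn_infty]
    intro k
    exact (hsmooth k).of_le (Nat.cast_le.mpr (by omega))
  refine ⟨htop, ?_⟩
  -- pointwise derivative facts
  have hC1g : ContDiffOn ℝ 1 g S := (hsmooth 0).of_le (Nat.one_le_cast.mpr (by omega))
  have hC1dg : ContDiffOn ℝ 1 (deriv g) S :=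
    (hsmooth 0).deriv_of_isOpen hS (by exact_mod_cast (by omega : 1 + 1 ≤ 0 + 2))
  have hd2 : ∀ x ∈ S, HasDerivAt (deriv g) (deriv (deriv g) x) x := fun x hx =>
    ((hC1dg.contDiffAt (hS.mem_nhds hx)).differentiableAt one_ne_zero).hasDerivAt
  have hdi : ∀ x ∈ S, HasDerivAt (fun s => (g s)⁻¹) (-((g x)⁻¹ * deriv g x * (g x)⁻¹)) x :=
    fun x hx => hasDerivAt_matinv hS hx hC1g hinv
  have hQd : ∀ x ∈ S, HasDerivAt Q ((2/x) • Q x) x := by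
    intro x hx
    have hx0 : x ≠ 0 := ne_of_gt hx.1
    have hA := hasDerivAt_matmul (hd2 x hx) (hdi x hx)
    have hQ' := hasDerivAt_matmul hA (hd2 x hx)
    convert hQ' using 1
    rw [hODE x hx]
    simp only [hQdef, mul_add, add_mul, smul_mul_assoc, mul_smul_comm, mul_assoc, mul_neg,
      neg_mul, smul_neg]
    match_scalars <;> field_simp <;> ring
  have h3 : ∀ x ∈ S, HasDerivAt (deriv (deriv g)) ((3/(2*x)) • Q x) x := by
    intro x hx
    have hx0 : x ≠ 0 := ne_of_gt hx.1
    have hrhs : HasDerivAt (fun s => (1/2 : ℝ) • Q s + s⁻¹ • deriv g s)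
        ((1/2 : ℝ) • ((2/x) • Q x) + (x⁻¹ • deriv (deriv g) x + -(x ^ 2)⁻¹ • deriv g x)) x :=
      ((hQd x hx).const_smul ((1:ℝ)/2)).add ((hasDerivAt_inv hx0).smul (hd2 x hx))
    have heq : deriv (deriv g) =ᶠ[nhds x] fun s => (1/2 : ℝ) • Q s + s⁻¹ • deriv g s :=
      Filter.eventuallyEq_of_mem (hS.mem_nhds hx) hODE
    have hres := hrhs.congr_of_eventuallyEq heq
    refine hres.congr_deriv ?_
    rw [hODE x hx]
    match_scalars <;> field_simp <;> ring
  have h3fun : ∀ x ∈ S, deriv (deriv (deriv g)) x = (3/(2*x)) • Q x :=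
    fun x hx => (h3 x hx).deriv
  have h4fun : ∀ x ∈ S, deriv (deriv (deriv (deriv g))) x = (3/(2*x^2)) • Q x := by
    intro x hx
    have hx0 : x ≠ 0 := ne_of_gt hx.1
    have heq : deriv (deriv (deriv g)) =ᶠ[nhds x] fun s => (3/(2*s)) • Q s :=
      Filter.eventuallyEq_of_mem (hS.mem_nhds hx) h3fun
    refine heq.deriv_eq.trans ?_
    have hc : HasDerivAt (fun s : ℝ => 3/(2*s)) ((3/2) * (-(x^2)⁻¹)) x := by
      have := (hasDerivAt_inv hx0).const_mul ((3:ℝ)/2)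
      have e : (fun s : ℝ => 3/(2*s)) = fun y => 3/2 * y⁻¹ := funext fun s => by
        rw [div_eq_mul_inv, mul_inv]; ring
      rw [e]; exact this
    have hval := hc.smul (hQd x hx)
    refine hval.deriv.trans ?_
    match_scalars <;> field_simp <;> ring
  have h5fun : ∀ x ∈ S, deriv (deriv (deriv (deriv (deriv g)))) x = 0 := by
    intro x hx
    have hx0 : x ≠ 0 := ne_of_gt hx.1
    have heq : deriv (deriv (deriv (deriv g))) =ᶠ[nhds x] fun s => (3/(2*s^2)) • Q s :=
      Filter.eventuallyEq_of_mem (hS.mem_nhds hx) h4fun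
    refine heq.deriv_eq.trans ?_
    have hc : HasDerivAt (fun s : ℝ => 3/(2*s^2))
        ((3/2) * (-(2 * x ^ 1) / (x^2)^2)) x := by
      have := ((hasDerivAt_pow 2 x).inv (pow_ne_zero 2 hx0)).const_mul ((3:ℝ)/2)
      have e : (fun s : ℝ => 3/(2*s^2)) = fun y => 3/2 * (fun x => x^2)⁻¹ y := funext fun s => by
        rw [Pi.inv_apply, div_eq_mul_inv, mul_inv]; ring
      rw [e]; exact this.congr_deriv (by norm_num)
    have hval := hc.smul (hQd x hx)
    refine hval.deriv.trans ?_
    match_scalars <;> field_simp <;> ring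
  -- assemble
  intro Ω hΩ
  refine ⟨(hQd Ω hΩ).deriv, ?_, ?_, ?_⟩
  · have e3 : iteratedDeriv 3 g = deriv (deriv (deriv g)) := by
      rw [show (3:ℕ) = 1+1+1 from rfl, iteratedDeriv_succ, iteratedDeriv_succ, iteratedDeriv_one]
      rfl
    rw [e3]; exact h3fun Ω hΩ
  · have e4 : iteratedDeriv 4 g = deriv (deriv (deriv (deriv g))) := by
      rw [show (4:ℕ) = 1+1+1+1 from rfl, iteratedDeriv_succ, iteratedDeriv_succ,
        iteratedDeriv_succ, iteratedDeriv_one]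
      rfl
    rw [e4]; exact h4fun Ω hΩ
  · have e5 : iteratedDeriv 5 g = deriv (deriv (deriv (deriv (deriv g)))) := by
      rw [show (5:ℕ) = 1+1+1+1+1 from rfl, iteratedDeriv_succ, iteratedDeriv_succ,
        iteratedDeriv_succ, iteratedDeriv_succ, iteratedDeriv_one]
      rfl
    rw [e5]; exact h5fun Ω hΩ
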